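/- Let k ∈ ℕ and let f ∈ C^k(ℝ^(m+1) \ {0}) satisfy f ≥ f₀ on the unit sphere S^m for some 0 < f₀ ≤ 1, and let p ≥ 1. Then there is a constant C = C(m,k,p) such that for every multi-index α with |α| ≤ k and every ξ ∈ S^m, |D^α(f^(-p))(ξ)| ≤ C · f₀^(-(k+p)) · ρ̂_k(f)^k, where ρ̂_k(f) := max{1, max{|D^β f(ζ)| : ζ ∈ S^m, |β| ≤ k}}. -/

import Mathlib

lemma rpow_iteratedDerivWithin (q : ℝ) :
    ∀ n : ℕ, ∀ x ∈ Set.Ioi (0:ℝ),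
      iteratedDerivWithin n (fun t : ℝ => t ^ q) (Set.Ioi 0) x
        = (∏ j ∈ Finset.range n, (q - j)) * x ^ (q - n) := by
  intro n
  induction n with
  | zero => intro x hx; simp
  | succ n IH =>
    intro x hx
    rw [iteratedDerivWithin_succ]
    have h1 : derivWithin (iteratedDerivWithin n (fun t : ℝ => t ^ q) (Set.Ioi 0)) (Set.Ioi 0) x
        = derivWithin (fun x : ℝ => (∏ j ∈ Finset.range n, (q - j)) * x ^ (q - n)) (Set.Ioi 0) x :=
      derivWithin_congr (fun y hy => IH y hy) (IH x hx)
    rw [h1, derivWithin_of_isOpen isOpen_Ioi hx,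
      deriv_const_mul _ (Real.differentiableAt_rpow_const_of_ne _ (ne_of_gt hx)),
      Real.deriv_rpow_const, Finset.prod_range_succ]
    push_cast
    rw [sub_sub, mul_assoc]

theorem deriv_inv_power_bound (m k : ℕ) (p : ℝ) (hp : 1 ≤ p) :
    ∃ C : ℝ, 0 < C ∧
      ∀ (f : EuclideanSpace ℝ (Fin (m + 1)) → ℝ) (f₀ : ℝ),
        ContDiffOn ℝ k f {(0 : EuclideanSpace ℝ (Fin (m + 1)))}ᶜ →
        0 < f₀ → f₀ ≤ 1 →
        (∀ ξ ∈ Metric.sphere (0 : EuclideanSpace ℝ (Fin (m + 1))) 1, f₀ ≤ f ξ) →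
        ∀ i ≤ k, ∀ ξ ∈ Metric.sphere (0 : EuclideanSpace ℝ (Fin (m + 1))) 1,
          ‖iteratedFDeriv ℝ i (fun y => f y ^ (-p)) ξ‖ ≤
            C * f₀ ^ (-((k : ℝ) + p)) *
              (max 1 (⨆ j : Fin (k + 1),
                ⨆ ζ : Metric.sphere (0 : EuclideanSpace ℝ (Fin (m + 1))) 1,
                  ‖iteratedFDeriv ℝ (j : ℕ) f (ζ : EuclideanSpace ℝ (Fin (m + 1)))‖)) ^ k := by
  have hpk : (0:ℝ) < p + k := by
    have : (0:ℝ) ≤ k := Nat.cast_nonneg k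
    linarith
  refine ⟨(k.factorial : ℝ) * (p + k) ^ k,
    mul_pos (by exact_mod_cast Nat.factorial_pos k) (pow_pos hpk k), ?_⟩
  intro f f₀ hf hf₀ hf₀1 hfge i hik ξ hξ
  set S := Metric.sphere (0 : EuclideanSpace ℝ (Fin (m + 1))) 1 with hS
  set M : ℝ := max 1 (⨆ j : Fin (k + 1), ⨆ ζ : S,
      ‖iteratedFDeriv ℝ (j : ℕ) f (ζ : EuclideanSpace ℝ (Fin (m + 1)))‖) with hM
  have hM1 : 1 ≤ M := le_max_left _ _
  have hop : IsOpen ({(0 : EuclideanSpace ℝ (Fin (m + 1)))}ᶜ) := isOpen_compl_singleton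
  have hSsub : S ⊆ {(0 : EuclideanSpace ℝ (Fin (m + 1)))}ᶜ := by
    intro x hx
    simp only [Set.mem_compl_iff, Set.mem_singleton_iff]
    intro h
    rw [hS, Metric.mem_sphere, h] at hx
    simp at hx
  have hcont : ∀ j : ℕ, j ≤ k →
      ContinuousOn (fun x => ‖iteratedFDeriv ℝ j f x‖)
        ({(0 : EuclideanSpace ℝ (Fin (m + 1)))}ᶜ) := by
    intro j hj
    exact ((hf.continuousOn_iteratedFDerivWithin (by exact_mod_cast hj)
      hop.uniqueDiffOn).congr (iteratedFDerivWithin_of_isOpen j hop).symm).norm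
  have hMle : ∀ j : ℕ, j ≤ k → ∀ ζ ∈ S, ‖iteratedFDeriv ℝ j f ζ‖ ≤ M := by
    intro j hj ζ hζ
    have hbdd : ∀ j' : Fin (k + 1), BddAbove (Set.range fun ζ : S =>
        ‖iteratedFDeriv ℝ (j' : ℕ) f (ζ : EuclideanSpace ℝ (Fin (m + 1)))‖) := by
      intro j'
      have hsub : Set.range (fun ζ : S =>
            ‖iteratedFDeriv ℝ (j' : ℕ) f (ζ : EuclideanSpace ℝ (Fin (m + 1)))‖)
          ⊆ (fun x => ‖iteratedFDeriv ℝ (j' : ℕ) f x‖) '' S := by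
        rintro _ ⟨ζ, rfl⟩; exact ⟨ζ, ζ.2, rfl⟩
      exact BddAbove.mono hsub ((isCompact_sphere _ _).bddAbove_image
        ((hcont j' (by omega)).mono hSsub))
    set jfin : Fin (k + 1) := ⟨j, by omega⟩ with hjfin
    calc ‖iteratedFDeriv ℝ j f ζ‖
        = ‖iteratedFDeriv ℝ ((jfin : ℕ)) f ζ‖ := rfl
      _ ≤ ⨆ ζ : S, ‖iteratedFDeriv ℝ ((jfin : ℕ)) f
            (ζ : EuclideanSpace ℝ (Fin (m + 1)))‖ := le_ciSup (hbdd _) ⟨ζ, hζ⟩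
      _ ≤ ⨆ j' : Fin (k + 1), ⨆ ζ : S, ‖iteratedFDeriv ℝ (j' : ℕ) f
            (ζ : EuclideanSpace ℝ (Fin (m + 1)))‖ :=
          le_ciSup (f := fun j' : Fin (k + 1) => ⨆ ζ : S, ‖iteratedFDeriv ℝ (j' : ℕ) f
            (ζ : EuclideanSpace ℝ (Fin (m + 1)))‖) (Finite.bddAbove_range _) jfin
      _ ≤ M := le_max_right _ _
  set U := {(0 : EuclideanSpace ℝ (Fin (m + 1)))}ᶜ ∩ f ⁻¹' Set.Ioi 0 with hU
  have hUopen : IsOpen U := hf.continuousOn.isOpen_inter_preimage hop isOpen_Ioi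
  have hfξpos : (0:ℝ) < f ξ := lt_of_lt_of_le hf₀ (hfge ξ hξ)
  have hξU : ξ ∈ U := ⟨hSsub hξ, hfξpos⟩
  have hg : ContDiffOn ℝ k (fun t : ℝ => t ^ (-p)) (Set.Ioi 0) := fun x hx =>
    (Real.contDiffAt_rpow_const_of_ne (ne_of_gt hx)).contDiffWithinAt
  have hC : ∀ i' ≤ i, ‖iteratedFDerivWithin ℝ i' (fun t : ℝ => t ^ (-p)) (Set.Ioi 0) (f ξ)‖
      ≤ (p + k) ^ k * f₀ ^ (-((k : ℝ) + p)) := by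
    intro i' hi'
    rw [norm_iteratedFDerivWithin_eq_norm_iteratedDerivWithin, Real.norm_eq_abs,
      rpow_iteratedDerivWithin (-p) i' (f ξ) hfξpos, abs_mul]
    have h1 : |∏ j ∈ Finset.range i', (-p - (j:ℝ))| ≤ (p + k) ^ k := by
      rw [Finset.abs_prod]
      calc ∏ j ∈ Finset.range i', |(-p - (j:ℝ))|
          ≤ ∏ _j ∈ Finset.range i', (p + k) := by
            refine Finset.prod_le_prod (fun j _ => abs_nonneg _) (fun j hj => ?_)
            have hjk : (j:ℝ) ≤ k := by
              have : j < i' := Finset.mem_range.mp hj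
              exact_mod_cast (by omega : j ≤ k)
            have h0 : -p - (j:ℝ) ≤ 0 := by
              have : (0:ℝ) ≤ j := Nat.cast_nonneg j
              linarith
            rw [abs_of_nonpos h0]
            linarith
        _ = (p + k) ^ i' := by rw [Finset.prod_const, Finset.card_range]
        _ ≤ (p + k) ^ k := pow_le_pow_right₀ (by linarith [Nat.cast_nonneg (α := ℝ) k])
            (le_trans hi' hik)
    have h2 : |f ξ ^ (-p - (i':ℝ))| ≤ f₀ ^ (-((k : ℝ) + p)) := by
      rw [abs_of_nonneg (Real.rpow_nonneg (le_of_lt hfξpos) _)]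
      have hi'k : (i':ℝ) ≤ k := by exact_mod_cast le_trans hi' hik
      calc f ξ ^ (-p - (i':ℝ))
          ≤ f₀ ^ (-p - (i':ℝ)) := Real.rpow_le_rpow_of_nonpos hf₀ (hfge ξ hξ)
            (by have : (0:ℝ) ≤ i' := Nat.cast_nonneg i'; linarith)
        _ ≤ f₀ ^ (-((k : ℝ) + p)) := Real.rpow_le_rpow_of_exponent_ge hf₀ hf₀1 (by linarith)
    exact mul_le_mul h1 h2 (abs_nonneg _) (by positivity)
  have hD : ∀ i', 1 ≤ i' → i' ≤ i → ‖iteratedFDerivWithin ℝ i' f U ξ‖ ≤ M ^ i' := by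
    intro i' hi'1 hi'
    rw [iteratedFDerivWithin_of_isOpen i' hUopen hξU]
    calc ‖iteratedFDeriv ℝ i' f ξ‖ ≤ M := hMle i' (le_trans hi' hik) ξ hξ
      _ ≤ M ^ i' := le_self_pow₀ hM1 (by omega)
  have hcomp := norm_iteratedFDerivWithin_comp_le hg
    (hf.mono Set.inter_subset_left) (by exact_mod_cast hik)
    isOpen_Ioi.uniqueDiffOn hUopen.uniqueDiffOn (fun x hx => hx.2) hξU hC hD
  have heq : (fun y => f y ^ (-p)) = (fun t : ℝ => t ^ (-p)) ∘ f := rfl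
  rw [heq, ← iteratedFDerivWithin_of_isOpen i hUopen hξU]
  calc ‖iteratedFDerivWithin ℝ i ((fun t : ℝ => t ^ (-p)) ∘ f) U ξ‖
      ≤ (i.factorial : ℝ) * ((p + k) ^ k * f₀ ^ (-((k : ℝ) + p))) * M ^ i := hcomp
    _ ≤ (k.factorial : ℝ) * ((p + k) ^ k * f₀ ^ (-((k : ℝ) + p))) * M ^ k := by
        have h1 : (i.factorial : ℝ) ≤ (k.factorial : ℝ) := by
          exact_mod_cast Nat.factorial_le hik
        have h2 : M ^ i ≤ M ^ k := pow_le_pow_right₀ hM1 hik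
        have hn1 : (0:ℝ) ≤ (p + k) ^ k * f₀ ^ (-((k : ℝ) + p)) :=
          mul_nonneg (pow_nonneg hpk.le k) (Real.rpow_nonneg hf₀.le _)
        exact mul_le_mul (mul_le_mul_of_nonneg_right h1 hn1) h2
          (pow_nonneg (by linarith) i)
          (mul_nonneg (Nat.cast_nonneg _) hn1)
    _ = (k.factorial : ℝ) * (p + k) ^ k * f₀ ^ (-((k : ℝ) + p)) * M ^ k := by ring
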